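/- Let G = (V, E) be a finite simple graph and let v₁, …, v_l (l ≥ 2, vertices pairwise distinct, v_i adjacent to v_{i+1} for all i) be a path in G such that every inner vertex v₂, …, v_{l−1} has degree exactly 2 in G. Let W ⊆ V induce a connected subgraph of G with v₁ ∈ W and v_l ∉ W. Then there exists j ∈ {1, …, l−1} such that W ∩ {v₁, …, v_l} = {v₁, …, v_j}. -/
import Mathlib


theorem stmt8 {V : Type*} [Fintype V] [DecidableEq V]
    (G : SimpleGraph V) [DecidableRel G.Adj]
    (l : ℕ) (hl : 2 ≤ l) (v : Fin l → V)
    (hinj : Function.Injective v)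
    (hpath : ∀ (i : ℕ) (h : i + 1 < l), G.Adj (v ⟨i, by omega⟩) (v ⟨i + 1, h⟩))
    (hdeg : ∀ (i : ℕ) (h : i < l), 0 < i → i + 1 < l → G.degree (v ⟨i, h⟩) = 2)
    (W : Set V) (hconn : (G.induce W).Connected)
    (h0 : v ⟨0, by omega⟩ ∈ W) (hlast : v ⟨l - 1, by omega⟩ ∉ W) :
    ∃ j : ℕ, 1 ≤ j ∧ j ≤ l - 1 ∧
      W ∩ Set.range v = v '' {i : Fin l | (i : ℕ) < j} := by
  classical
  -- neighbors of an inner vertex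
  have hnbr : ∀ (m : ℕ) (hm0 : 0 < m) (hm : m + 1 < l) (u : V),
      G.Adj (v ⟨m, by omega⟩) u → u = v ⟨m - 1, by omega⟩ ∨ u = v ⟨m + 1, hm⟩ := by
    intro m hm0 hm u hu
    have hprev : G.Adj (v ⟨m - 1, by omega⟩) (v ⟨m, by omega⟩) := by
      have := hpath (m - 1) (by omega)
      have e : (⟨m - 1 + 1, by omega⟩ : Fin l) = ⟨m, by omega⟩ := by
        ext; simp; omega
      rwa [e] at this
    have hnext : G.Adj (v ⟨m, by omega⟩) (v ⟨m + 1, hm⟩) := hpath m hm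
    have hne : v (⟨m - 1, by omega⟩ : Fin l) ≠ v ⟨m + 1, hm⟩ := by
      intro h
      have := hinj h
      simp only [Fin.ext_iff] at this
      omega
    set N := G.neighborFinset (v ⟨m, by omega⟩) with hN
    have hsub : ({v ⟨m - 1, by omega⟩, v ⟨m + 1, hm⟩} : Finset V) ⊆ N := by
      intro x hx
      simp only [Finset.mem_insert, Finset.mem_singleton] at hx
      rcases hx with rfl | rfl
      · simp [hN, SimpleGraph.mem_neighborFinset, hprev.symm]
      · simp [hN, SimpleGraph.mem_neighborFinset, hnext]
    have hcard : N.card = 2 := hdeg m (by omega) hm0 hm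
    have heq : ({v ⟨m - 1, by omega⟩, v ⟨m + 1, hm⟩} : Finset V) = N := by
      apply Finset.eq_of_subset_of_card_le hsub
      rw [hcard, Finset.card_insert_of_notMem (by simpa using hne),
        Finset.card_singleton]
    have huN : u ∈ N := by simp [hN, SimpleGraph.mem_neighborFinset, hu]
    rw [← heq] at huN
    simpa using huN
  -- least index not in W
  have hPex : ∃ i : ℕ, ∃ h : i < l, v ⟨i, h⟩ ∉ W := ⟨l - 1, by omega, hlast⟩
  set j := Nat.find hPex with hjdef
  obtain ⟨hjl, hjW⟩ := Nat.find_spec hPex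
  have hjmin : ∀ i (h : i < l), i < j → v ⟨i, h⟩ ∈ W := by
    intro i h hij
    by_contra hc
    exact Nat.find_min hPex hij ⟨h, hc⟩
  have hj1 : 1 ≤ j := by
    rcases Nat.eq_zero_or_pos j with h | h
    · exfalso
      apply hjW
      have e : (⟨j, hjl⟩ : Fin l) = ⟨0, by omega⟩ := by ext; simp [h]
      rw [e]; exact h0
    · exact h
  -- key: no vertex v_m with m > j can be in W
  have key : ∀ (x y : W) (p : (G.induce W).Walk x y),
      (∃ m : ℕ, ∃ hm : m < l, j < m ∧ (x : V) = v ⟨m, hm⟩) →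
      (y : V) = v ⟨0, by omega⟩ → False := by
    intro x y p
    induction p with
    | nil =>
      rintro ⟨m, hm, hjm, hx⟩ hy
      rw [hx] at hy
      have := hinj hy
      simp [Fin.ext_iff] at this
      omega
    | @cons a b c h p ih =>
      rintro ⟨m, hm, hjm, hx⟩ hy
      have hmlast : m ≠ l - 1 := by
        intro e
        apply hlast
        have e2 : (⟨l - 1, by omega⟩ : Fin l) = ⟨m, hm⟩ := by ext; simp; omega
        rw [e2, ← hx]; exact a.2
      have hm1 : m + 1 < l := by omega
      have hm0 : 0 < m := by omega
      have hadj : G.Adj (v ⟨m, by omega⟩) (b : V) := by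
        have h' : G.Adj (a : V) (b : V) := h
        rwa [hx] at h'
      rcases hnbr m hm0 hm1 _ hadj with hb | hb
      · rcases Nat.lt_or_ge j (m - 1) with hlt | hge
        · exact ih ⟨m - 1, by omega, hlt, hb⟩ hy
        · have e : m - 1 = j := by omega
          apply hjW
          have e2 : (⟨j, hjl⟩ : Fin l) = ⟨m - 1, by omega⟩ := by ext; simp [e]
          rw [e2, ← hb]; exact b.2
      · exact ih ⟨m + 1, hm1, by omega, hb⟩ hy
  refine ⟨j, hj1, by omega, ?_⟩
  ext u
  constructor
  · rintro ⟨huW, i, rfl⟩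
    rcases Nat.lt_or_ge (i : ℕ) j with hij | hij
    · exact ⟨i, hij, rfl⟩
    · exfalso
      rcases Nat.eq_or_lt_of_le hij with he | hlt
      · apply hjW
        have e : (⟨j, hjl⟩ : Fin l) = i := by ext; simp [← he]
        rw [e]; exact huW
      · obtain ⟨w⟩ := hconn.preconnected ⟨v i, huW⟩ ⟨v ⟨0, by omega⟩, h0⟩
        exact key _ _ w ⟨(i : ℕ), i.2, hlt, by congr⟩ rfl
  · rintro ⟨i, hi, rfl⟩
    exact ⟨hjmin i i.2 hi, i, rfl⟩
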